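/- The maximum number of regions into which m hyperplanes can partition R^d equals the sum over j = 0 to d of binom(m, j), where binom(m, j) = 0 when j > m. -/

import Mathlib

open scoped RealInnerProductSpace

namespace MaxRegions

variable {V : Type} [AddCommGroup V] [Module ℝ V]

/-- The set of realizable sign vectors of the affine functionals `x ↦ f i x + c i`. -/
def SignsSet {m : ℕ} (f : Fin m → V →ₗ[ℝ] ℝ) (c : Fin m → ℝ) : Set (Fin m → Bool) :=
  {s | ∃ x : V, ∀ i, (f i x + c i ≠ 0) ∧ s i = decide (0 < f i x + c i)}

lemma sign_iff {A : ℝ} {s : Bool} :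
    (A ≠ 0 ∧ s = decide (0 < A)) ↔ (if s then 0 < A else A < 0) := by
  cases s with
  | true =>
    simp only [if_true, eq_comm (a := true), decide_eq_true_eq]
    constructor
    · rintro ⟨h1, h2⟩; exact h2
    · intro h; exact ⟨ne_of_gt h, h⟩
  | false =>
    simp only [if_false, eq_comm (a := false), decide_eq_false_iff_not, not_lt]
    constructor
    · rintro ⟨h1, h2⟩; exact lt_of_le_of_ne h2 h1
    · intro h; exact ⟨ne_of_lt h, le_of_lt h⟩

lemma sign_mix {u v A B : ℝ} (hu : 0 < u) (hv : 0 < v) {s : Bool}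
    (hA : if s then 0 < A else A < 0) (hB : if s then 0 < B else B < 0) :
    if s then 0 < u * A + v * B else u * A + v * B < 0 := by
  cases s <;> simp only [Bool.false_eq_true, if_true, if_false] at hA hB ⊢ <;> nlinarith

lemma sign_perturb {A y : ℝ} {s : Bool} (h : if s then 0 < A else A < 0) (hy : |y| < |A|) :
    (if s then 0 < A + y else A + y < 0) := by
  cases s with
  | true =>
    simp only [Bool.false_eq_true, if_true, if_false] at h ⊢
    rw [abs_of_pos h] at hy
    have := (abs_lt.mp hy).1; linarith
  | false =>
    simp only [Bool.false_eq_true, if_true, if_false] at h ⊢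
    rw [abs_of_neg h] at hy
    have := (abs_lt.mp hy).2; linarith

lemma pascal_sum (m d : ℕ) :
    ∑ j ∈ Finset.range (d + 1), (m + 1).choose j
      = ∑ j ∈ Finset.range (d + 1), m.choose j + ∑ j ∈ Finset.range d, m.choose j := by
  induction d with
  | zero => simp
  | succ d ih =>
    calc ∑ j ∈ Finset.range (d + 1 + 1), (m + 1).choose j
        = ∑ j ∈ Finset.range (d + 1), (m + 1).choose j + (m + 1).choose (d + 1) :=
          Finset.sum_range_succ _ _
      _ = (∑ j ∈ Finset.range (d + 1), m.choose j + ∑ j ∈ Finset.range d, m.choose j)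
            + (m.choose d + m.choose (d + 1)) := by rw [ih, Nat.choose_succ_succ]
      _ = (∑ j ∈ Finset.range (d + 1), m.choose j + m.choose (d + 1))
            + (∑ j ∈ Finset.range d, m.choose j + m.choose d) := by ring
      _ = ∑ j ∈ Finset.range (d + 1 + 1), m.choose j
            + ∑ j ∈ Finset.range (d + 1), m.choose j := by
          rw [Finset.sum_range_succ (f := fun j => m.choose j) (n := d + 1),
            Finset.sum_range_succ (f := fun j => m.choose j) (n := d)]

lemma sum_choose_mono (m d : ℕ) :
    ∑ j ∈ Finset.range (d + 1), m.choose j ≤ ∑ j ∈ Finset.range (d + 1), (m + 1).choose j :=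
  Finset.sum_le_sum fun j _ => Nat.choose_le_choose j (Nat.le_succ m)

lemma moment_zero {ι : Type*} (I : Finset ι) (t lam : ι → ℝ) (ht : Set.InjOn t I) (D : ℕ)
    (hcard : I.card ≤ D + 1)
    (hmom : ∀ k ≤ D, ∑ i ∈ I, lam i * t i ^ k = 0) :
    ∀ i ∈ I, lam i = 0 := by
  classical
  intro i0 hi0
  set r : Polynomial ℝ := ∏ j ∈ I.erase i0, (Polynomial.X - Polynomial.C (t j)) with hr
  have hdeg : r.natDegree < D + 1 := by
    have h2 : ∑ j ∈ I.erase i0, (Polynomial.X - Polynomial.C (t j)).natDegree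
        = I.card - 1 := by
      simp [Polynomial.natDegree_X_sub_C, Finset.card_erase_of_mem hi0]
    have h1 : r.natDegree ≤ I.card - 1 := by
      rw [hr]
      exact le_trans (Polynomial.natDegree_prod_le _ _) (le_of_eq h2)
    have hc : 1 ≤ I.card := Finset.card_pos.mpr ⟨i0, hi0⟩
    omega
  have key : ∑ i ∈ I, lam i * r.eval (t i) = 0 := by
    have hterm : ∀ i ∈ I, lam i * r.eval (t i)
        = ∑ k ∈ Finset.range (D + 1), r.coeff k * (lam i * t i ^ k) := by
      intro i hi
      rw [Polynomial.eval_eq_sum_range' hdeg, Finset.mul_sum]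
      exact Finset.sum_congr rfl fun k _ => by ring
    rw [Finset.sum_congr rfl hterm, Finset.sum_comm]
    refine Finset.sum_eq_zero fun k hk => ?_
    rw [← Finset.mul_sum, hmom k (by simpa using Nat.lt_succ_iff.mp (Finset.mem_range.mp hk)),
      mul_zero]
  have hvan : ∀ i ∈ I, i ≠ i0 → r.eval (t i) = 0 := by
    intro i hi hne
    rw [hr, Polynomial.eval_prod]
    exact Finset.prod_eq_zero (Finset.mem_erase.mpr ⟨hne, hi⟩) (by simp)
  have hsingle : ∑ i ∈ I, lam i * r.eval (t i) = lam i0 * r.eval (t i0) :=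
    Finset.sum_eq_single i0 (fun i hi hne => by rw [hvan i hi hne, mul_zero])
      (fun h => absurd hi0 h)
  have hne : r.eval (t i0) ≠ 0 := by
    rw [hr, Polynomial.eval_prod]
    refine Finset.prod_ne_zero_iff.mpr fun j hj => ?_
    obtain ⟨hji, hjI⟩ := Finset.mem_erase.mp hj
    simp only [Polynomial.eval_sub, Polynomial.eval_X, Polynomial.eval_C, sub_ne_zero]
    exact fun hEq => hji (ht hjI hi0 hEq.symm)
  have := hsingle ▸ key
  exact (mul_eq_zero.mp this).resolve_right hne

lemma eq_smul_of_vanish {φ g : V →ₗ[ℝ] ℝ} {u : V} (hu : φ u = 1)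
    (h : ∀ w, φ w = 0 → g w = 0) : g = g u • φ := by
  ext x
  have h1 : φ (x - φ x • u) = 0 := by simp [hu]
  have h2 := h _ h1
  simp only [map_sub, map_smul, smul_eq_mul, hu, mul_one, LinearMap.smul_apply] at h2 ⊢
  linarith


section Counting

lemma restrict_mem {m : ℕ} {f : Fin (m + 1) → V →ₗ[ℝ] ℝ} {c : Fin (m + 1) → ℝ}
    {s : Fin (m + 1) → Bool} (hs : s ∈ SignsSet f c) :
    (fun i => s i.castSucc) ∈ SignsSet (fun i : Fin m => f i.castSucc) (fun i => c i.castSucc) := by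
  obtain ⟨x, hx⟩ := hs
  exact ⟨x, fun i => hx i.castSucc⟩

lemma restrict_injOn (m : ℕ) (b0 : Bool) :
    Set.InjOn (fun (s : Fin (m + 1) → Bool) (i : Fin m) => s i.castSucc)
      {s | s (Fin.last m) = b0} := by
  intro s₁ h1 s₂ h2 h
  funext j
  induction j using Fin.lastCases with
  | last => exact h1.trans h2.symm
  | cast i => exact congrFun h i

theorem signs_ncard_le (m : ℕ) :
    ∀ (V : Type) [AddCommGroup V] [Module ℝ V] [FiniteDimensional ℝ V] (d : ℕ),
      Module.finrank ℝ V ≤ d → ∀ (f : Fin m → V →ₗ[ℝ] ℝ) (c : Fin m → ℝ),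
      (SignsSet f c).ncard ≤ ∑ j ∈ Finset.range (d + 1), m.choose j := by
  induction m with
  | zero =>
    intro V _ _ _ d hd f c
    have h1 : (SignsSet f c).ncard ≤ 1 := by
      have := Set.ncard_le_ncard (Set.subset_univ (SignsSet f c)) (Set.toFinite _)
      rwa [Set.ncard_univ, Nat.card_unique] at this
    have h2 : 1 ≤ ∑ j ∈ Finset.range (d + 1), Nat.choose 0 j := by
      have := Finset.single_le_sum (f := fun j => Nat.choose 0 j)
        (fun i _ => Nat.zero_le _) (Finset.mem_range.mpr (Nat.succ_pos d))
      simpa using this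
    omega
  | succ m ih =>
    intro V _ _ _ d hd f c
    classical
    have hS'le : (SignsSet (fun i : Fin m => f i.castSucc) (fun i => c i.castSucc)).ncard
        ≤ ∑ j ∈ Finset.range (d + 1), m.choose j := ih V d hd _ _
    by_cases hflast : f (Fin.last m) = 0
    · by_cases hclast : c (Fin.last m) = 0
      · have hempty : SignsSet f c = (∅ : Set (Fin (m + 1) → Bool)) := by
          ext s
          simp only [Set.mem_empty_iff_false, iff_false]
          rintro ⟨x, hx⟩
          exact (hx (Fin.last m)).1 (by rw [hflast, hclast, LinearMap.zero_apply, add_zero])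
        rw [hempty, Set.ncard_empty]
        exact Nat.zero_le _
      · have hinj : Set.InjOn (fun (s : Fin (m + 1) → Bool) (i : Fin m) => s i.castSucc)
            (SignsSet f c) := by
          intro s₁ hs₁ s₂ hs₂ h
          obtain ⟨x₁, hx₁⟩ := hs₁
          obtain ⟨x₂, hx₂⟩ := hs₂
          funext j
          induction j using Fin.lastCases with
          | last =>
            have e1 := (hx₁ (Fin.last m)).2
            have e2 := (hx₂ (Fin.last m)).2
            rw [hflast] at e1 e2
            simp only [LinearMap.zero_apply, zero_add] at e1 e2
            rw [e1, e2]
          | cast i => exact congrFun h i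
        calc (SignsSet f c).ncard
            = ((fun (s : Fin (m + 1) → Bool) (i : Fin m) => s i.castSucc) '' SignsSet f c).ncard :=
              (Set.ncard_image_of_injOn hinj).symm
          _ ≤ (SignsSet (fun i : Fin m => f i.castSucc) (fun i => c i.castSucc)).ncard := by
              refine Set.ncard_le_ncard ?_ (Set.toFinite _)
              rintro s' ⟨s, hs, rfl⟩
              exact restrict_mem hs
          _ ≤ ∑ j ∈ Finset.range (d + 1), m.choose j := hS'le
          _ ≤ ∑ j ∈ Finset.range (d + 1), (m + 1).choose j := sum_choose_mono m d
    · -- main case : the last functional is nonzero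
      obtain ⟨u0, hu0⟩ : ∃ u0, f (Fin.last m) u0 ≠ 0 := by
        by_contra hcon
        push_neg at hcon
        exact hflast (LinearMap.ext fun x => by rw [hcon x, LinearMap.zero_apply])
      set u' : V := (f (Fin.last m) u0)⁻¹ • u0 with hu'def
      have hu' : f (Fin.last m) u' = 1 := by
        rw [hu'def, map_smul, smul_eq_mul, inv_mul_cancel₀ hu0]
      set p : V := (-(c (Fin.last m))) • u' with hpdef
      have hp : f (Fin.last m) p = -(c (Fin.last m)) := by
        rw [hpdef, map_smul, smul_eq_mul, hu', mul_one]
      have hsurj : Function.Surjective (f (Fin.last m)) := fun y =>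
        ⟨y • u', by rw [map_smul, smul_eq_mul, hu', mul_one]⟩
      have hrank : Module.finrank ℝ (LinearMap.ker (f (Fin.last m))) + 1
          = Module.finrank ℝ V := by
        have h0 := LinearMap.finrank_range_add_finrank_ker (f (Fin.last m))
        have h1 : Module.finrank ℝ ↥(LinearMap.range (f (Fin.last m))) = 1 := by
          rw [LinearMap.range_eq_top.mpr hsurj, finrank_top, Module.finrank_self]
        omega
      have hd1 : 1 ≤ d := by omega
      have hWd : Module.finrank ℝ (LinearMap.ker (f (Fin.last m))) ≤ d - 1 := by omega
      set W := LinearMap.ker (f (Fin.last m)) with hWdef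
      set h : Fin m → (W →ₗ[ℝ] ℝ) := fun i => (f i.castSucc).comp W.subtype with hhdef
      set c'' : Fin m → ℝ := fun i => c i.castSucc + f i.castSucc p with hc''def
      have hWle : (SignsSet h c'').ncard ≤ ∑ j ∈ Finset.range d, m.choose j := by
        have := ih W (d - 1) hWd h c''
        rwa [show d - 1 + 1 = d by omega] at this
      set r : (Fin (m + 1) → Bool) → (Fin m → Bool) := fun s i => s i.castSucc with hrdef
      set St := SignsSet f c ∩ {s | s (Fin.last m) = true} with hStdef
      set Sf := SignsSet f c ∩ {s | s (Fin.last m) = false} with hSfdef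
      have hsplit : SignsSet f c = St ∪ Sf := by
        ext s
        constructor
        · intro hs
          rcases Bool.eq_false_or_eq_true (s (Fin.last m)) with hb | hb
          · exact Or.inl ⟨hs, hb⟩
          · exact Or.inr ⟨hs, hb⟩
        · rintro (⟨hs, _⟩ | ⟨hs, _⟩) <;> exact hs
      have hdisj : Disjoint St Sf := by
        rw [Set.disjoint_left]
        rintro s ⟨_, h1⟩ ⟨_, h2⟩
        rw [Set.mem_setOf_eq] at h1 h2
        rw [h1] at h2
        exact Bool.noConfusion h2
      have hcards : (SignsSet f c).ncard = St.ncard + Sf.ncard := by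
        rw [hsplit]
        exact Set.ncard_union_eq hdisj (Set.toFinite _) (Set.toFinite _)
      have hEt : (r '' St).ncard = St.ncard :=
        Set.ncard_image_of_injOn ((restrict_injOn m true).mono fun s hs => hs.2)
      have hEf : (r '' Sf).ncard = Sf.ncard :=
        Set.ncard_image_of_injOn ((restrict_injOn m false).mono fun s hs => hs.2)
      have hsubt : r '' St ⊆ SignsSet (fun i : Fin m => f i.castSucc) (fun i => c i.castSucc) := by
        rintro s' ⟨s, hs, rfl⟩
        exact restrict_mem hs.1
      have hsubf : r '' Sf ⊆ SignsSet (fun i : Fin m => f i.castSucc) (fun i => c i.castSucc) := by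
        rintro s' ⟨s, hs, rfl⟩
        exact restrict_mem hs.1
      have hinter : (r '' St) ∩ (r '' Sf) ⊆ SignsSet h c'' := by
        rintro s' ⟨⟨s₁, hs₁, rfl⟩, ⟨s₂, hs₂, heq⟩⟩
        obtain ⟨x₁, hx₁⟩ := hs₁.1
        obtain ⟨x₂, hx₂⟩ := hs₂.1
        have hB : 0 < f (Fin.last m) x₁ + c (Fin.last m) := by
          have hh := sign_iff.mp (hx₁ (Fin.last m))
          rw [hs₁.2] at hh
          simpa using hh
        have hA : f (Fin.last m) x₂ + c (Fin.last m) < 0 := by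
          have hh := sign_iff.mp (hx₂ (Fin.last m))
          rw [hs₂.2] at hh
          simpa using hh
        set α : ℝ := f (Fin.last m) x₁ + c (Fin.last m) with hαdef
        set β : ℝ := -(f (Fin.last m) x₂ + c (Fin.last m)) with hβdef
        have hα : 0 < α := hB
        have hβ : 0 < β := by rw [hβdef]; linarith
        have hαβ : 0 < α + β := by linarith
        set uu : ℝ := α / (α + β) with huudef
        set vv : ℝ := β / (α + β) with hvvdef
        have huu : 0 < uu := div_pos hα hαβ
        have hvv : 0 < vv := div_pos hβ hαβ
        have huv : uu + vv = 1 := by rw [huudef, hvvdef]; field_simp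
        set x0 : V := uu • x₂ + vv • x₁ with hx0def
        have hval : ∀ j : Fin (m + 1),
            f j x0 + c j = uu * (f j x₂ + c j) + vv * (f j x₁ + c j) := by
          intro j
          rw [hx0def]
          simp only [map_add, map_smul, smul_eq_mul]
          linear_combination (-(c j)) * huv
        have hlast0 : f (Fin.last m) x0 + c (Fin.last m) = 0 := by
          rw [hval (Fin.last m), ← hαdef, show f (Fin.last m) x₂ + c (Fin.last m) = -β by
            rw [hβdef]; ring]
          field_simp [huudef, hvvdef]
          ring
        have hw : x0 - p ∈ W := by
          rw [hWdef, LinearMap.mem_ker, map_sub, hp]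
          have : f (Fin.last m) x0 = -(c (Fin.last m)) := by linarith
          rw [this]
          ring
        refine ⟨⟨x0 - p, hw⟩, fun i => ?_⟩
        have hvi : h i ⟨x0 - p, hw⟩ + c'' i = f i.castSucc x0 + c i.castSucc := by
          rw [hhdef, hc''def]
          simp only [LinearMap.comp_apply, Submodule.coe_subtype, map_sub]
          ring
        rw [hvi]
        apply sign_iff.mpr
        rw [hval i.castSucc]
        have hb1 := sign_iff.mp (hx₁ i.castSucc)
        have hb2 := sign_iff.mp (hx₂ i.castSucc)
        have hss : s₂ i.castSucc = s₁ i.castSucc := congrFun heq i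
        rw [hss] at hb2
        have hgoal : (r s₁) i = s₁ i.castSucc := rfl
        rw [hgoal]
        exact sign_mix huu hvv hb2 hb1
      calc (SignsSet f c).ncard = St.ncard + Sf.ncard := hcards
        _ = (r '' St).ncard + (r '' Sf).ncard := by rw [hEt, hEf]
        _ = ((r '' St) ∪ (r '' Sf)).ncard + ((r '' St) ∩ (r '' Sf)).ncard :=
            (Set.ncard_union_add_ncard_inter _ _ (Set.toFinite _) (Set.toFinite _)).symm
        _ ≤ (SignsSet (fun i : Fin m => f i.castSucc) (fun i => c i.castSucc)).ncard
              + (SignsSet h c'').ncard :=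
            add_le_add (Set.ncard_le_ncard (Set.union_subset hsubt hsubf) (Set.toFinite _))
              (Set.ncard_le_ncard hinter (Set.toFinite _))
        _ ≤ ∑ j ∈ Finset.range (d + 1), m.choose j + ∑ j ∈ Finset.range d, m.choose j :=
            add_le_add hS'le hWle
        _ = ∑ j ∈ Finset.range (d + 1), (m + 1).choose j := (pascal_sum m d).symm

end Counting


section Lower

/-- General position, part a. -/
def GPa {m : ℕ} (n : ℕ) (f : Fin m → V →ₗ[ℝ] ℝ) : Prop :=
  ∀ (I : Finset (Fin m)) (lam : Fin m → ℝ), I.card ≤ n →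
    ∑ i ∈ I, lam i • f i = 0 → ∀ i ∈ I, lam i = 0

/-- General position, part b. -/
def GPb {m : ℕ} (n : ℕ) (f : Fin m → V →ₗ[ℝ] ℝ) (c : Fin m → ℝ) : Prop :=
  ∀ (I : Finset (Fin m)) (lam : Fin m → ℝ), I.card ≤ n + 1 →
    ∑ i ∈ I, lam i • f i = 0 → ∑ i ∈ I, lam i * c i = 0 → ∀ i ∈ I, lam i = 0

lemma exists_eps {m : ℕ} (g base : Fin m → ℝ) (hbase : ∀ i, base i ≠ 0) :
    ∃ ε : ℝ, 0 < ε ∧ ∀ i, ε * |g i| < |base i| := by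
  rcases Nat.eq_zero_or_pos m with hm | hm
  · subst hm
    exact ⟨1, one_pos, fun i => i.elim0⟩
  · have hne : (Finset.univ : Finset (Fin m)).Nonempty := ⟨⟨0, hm⟩, Finset.mem_univ _⟩
    have hpos : 0 < Finset.univ.inf' hne (fun i => |base i| / (|g i| + 1)) :=
      (Finset.lt_inf'_iff hne).mpr fun i _ => div_pos (abs_pos.mpr (hbase i)) (by positivity)
    refine ⟨_, hpos, fun i => ?_⟩
    have hle : Finset.univ.inf' hne (fun i => |base i| / (|g i| + 1))
        ≤ |base i| / (|g i| + 1) := Finset.inf'_le _ (Finset.mem_univ i)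
    have h1 : Finset.univ.inf' hne (fun i => |base i| / (|g i| + 1)) * (|g i| + 1)
        ≤ |base i| := by
      rw [← le_div_iff₀ (by positivity)]
      exact hle
    nlinarith [abs_nonneg (g i)]

lemma extend_mem {m : ℕ} {f : Fin (m + 1) → V →ₗ[ℝ] ℝ} {c : Fin (m + 1) → ℝ}
    {x u' : V} {s' : Fin m → Bool}
    (hu' : f (Fin.last m) u' = 1)
    (hx : ∀ i : Fin m, f i.castSucc x + c i.castSucc ≠ 0 ∧
      s' i = decide (0 < f i.castSucc x + c i.castSucc))
    (hlast : f (Fin.last m) x + c (Fin.last m) = 0) (b : Bool) :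
    ∃ s ∈ SignsSet f c, s (Fin.last m) = b ∧ (fun i : Fin m => s i.castSucc) = s' := by
  obtain ⟨ε, hε, hεlt⟩ := exists_eps (fun i => f i.castSucc u')
    (fun i => f i.castSucc x + c i.castSucc) (fun i => (hx i).1)
  set δ : ℝ := if b then ε else -ε with hδdef
  have hδabs : |δ| = ε := by
    cases b <;>
      simp only [hδdef, Bool.false_eq_true, if_true, if_false, abs_neg] <;>
      exact abs_of_pos hε
  have hδne : δ ≠ 0 := by
    cases b <;> simp only [hδdef, Bool.false_eq_true, if_true, if_false, neg_ne_zero] <;>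
      exact ne_of_gt hε
  have hδsign : b = decide (0 < δ) := by
    cases b <;> simp only [hδdef, Bool.false_eq_true, if_true, if_false]
    · simp only [eq_comm (a := false), decide_eq_false_iff_not, not_lt]
      linarith
    · simp only [eq_comm (a := true), decide_eq_true_eq]
      exact hε
  refine ⟨Fin.lastCases b s', ⟨x + δ • u', fun j => ?_⟩, Fin.lastCases_last,
    funext fun i => Fin.lastCases_castSucc i⟩
  induction j using Fin.lastCases with
  | last =>
    have hv : f (Fin.last m) (x + δ • u') + c (Fin.last m) = δ := by
      rw [map_add, map_smul, smul_eq_mul, hu', mul_one]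
      linarith
    rw [hv]
    simp only [Fin.lastCases_last]
    exact ⟨hδne, hδsign⟩
  | cast i =>
    have hv : f i.castSucc (x + δ • u') + c i.castSucc
        = (f i.castSucc x + c i.castSucc) + δ * f i.castSucc u' := by
      rw [map_add, map_smul, smul_eq_mul]
      ring
    rw [hv]
    simp only [Fin.lastCases_castSucc]
    apply sign_iff.mpr
    refine sign_perturb (sign_iff.mp (hx i)) ?_
    rw [abs_mul, hδabs]
    exact hεlt i

theorem le_signs_ncard (m : ℕ) :
    ∀ (V : Type) [AddCommGroup V] [Module ℝ V] [FiniteDimensional ℝ V]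
      (f : Fin m → V →ₗ[ℝ] ℝ) (c : Fin m → ℝ),
      GPa (Module.finrank ℝ V) f → GPb (Module.finrank ℝ V) f c →
      ∑ j ∈ Finset.range (Module.finrank ℝ V + 1), m.choose j ≤ (SignsSet f c).ncard := by
  induction m with
  | zero =>
    intro V _ _ _ f c _ _
    have hmem : (fun i : Fin 0 => true) ∈ SignsSet f c := ⟨0, fun i => i.elim0⟩
    have h1 : 1 ≤ (SignsSet f c).ncard :=
      (Set.ncard_pos (Set.toFinite _)).mpr ⟨_, hmem⟩
    have h2 : ∑ j ∈ Finset.range (Module.finrank ℝ V + 1), Nat.choose 0 j = 1 := by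
      rw [Finset.sum_eq_single_of_mem 0 (Finset.mem_range.mpr (Nat.succ_pos _))
        (fun j _ hj => Nat.choose_eq_zero_of_lt (by omega))]
      rfl
    omega
  | succ m ih =>
    intro V _ _ _ f c hGPa hGPb
    classical
    rcases Nat.eq_zero_or_pos (Module.finrank ℝ V) with hn0 | hn1
    · -- zero-dimensional case
      have hsub : Subsingleton V := Module.finrank_zero_iff.mp hn0
      have hc : ∀ i, c i ≠ 0 := by
        intro i hci
        have hfi : f i = 0 := LinearMap.ext fun x => by
          rw [Subsingleton.elim x (0 : V), map_zero, LinearMap.zero_apply]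
        have := hGPb {i} (fun _ => 1) (by simp) (by simp [hfi]) (by simp [hci]) i
          (Finset.mem_singleton_self i)
        exact one_ne_zero this
      have hmem : (fun i => decide (0 < c i)) ∈ SignsSet f c := by
        refine ⟨0, fun i => ?_⟩
        rw [map_zero, zero_add]
        exact ⟨hc i, rfl⟩
      have h1 : 1 ≤ (SignsSet f c).ncard :=
        (Set.ncard_pos (Set.toFinite _)).mpr ⟨_, hmem⟩
      rw [hn0]
      simpa using h1
    · -- positive-dimensional case
      have hflast : f (Fin.last m) ≠ 0 := by
        intro h0
        have := hGPa {Fin.last m} (fun _ => 1) (by simpa using Nat.succ_le_of_lt hn1) (by simp [h0])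
          (Fin.last m) (Finset.mem_singleton_self _)
        exact one_ne_zero this
      obtain ⟨u0, hu0⟩ : ∃ u0, f (Fin.last m) u0 ≠ 0 := by
        by_contra hcon
        push_neg at hcon
        exact hflast (LinearMap.ext fun x => by rw [hcon x, LinearMap.zero_apply])
      set u' : V := (f (Fin.last m) u0)⁻¹ • u0 with hu'def
      have hu' : f (Fin.last m) u' = 1 := by
        rw [hu'def, map_smul, smul_eq_mul, inv_mul_cancel₀ hu0]
      set p : V := (-(c (Fin.last m))) • u' with hpdef
      have hp : f (Fin.last m) p = -(c (Fin.last m)) := by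
        rw [hpdef, map_smul, smul_eq_mul, hu', mul_one]
      have hsurj : Function.Surjective (f (Fin.last m)) := fun y =>
        ⟨y • u', by rw [map_smul, smul_eq_mul, hu', mul_one]⟩
      have hrank : Module.finrank ℝ (LinearMap.ker (f (Fin.last m))) + 1
          = Module.finrank ℝ V := by
        have h0 := LinearMap.finrank_range_add_finrank_ker (f (Fin.last m))
        have h1 : Module.finrank ℝ ↥(LinearMap.range (f (Fin.last m))) = 1 := by
          rw [LinearMap.range_eq_top.mpr hsurj, finrank_top, Module.finrank_self]
        omega
      set W := LinearMap.ker (f (Fin.last m)) with hWdef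
      set h : Fin m → (W →ₗ[ℝ] ℝ) := fun i => (f i.castSucc).comp W.subtype with hhdef
      set c'' : Fin m → ℝ := fun i => c i.castSucc + f i.castSucc p with hc''def
      set emb : Fin m ↪ Fin (m + 1) := ⟨Fin.castSucc, Fin.castSucc_injective m⟩ with hembdef
      have hembapp : ∀ i : Fin m, emb i = i.castSucc := fun i => rfl
      have hnotmem : ∀ I : Finset (Fin m), Fin.last m ∉ I.map emb := by
        intro I hmem
        obtain ⟨i, _, hi⟩ := Finset.mem_map.mp hmem
        exact absurd hi (Fin.castSucc_lt_last i).ne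
      -- general position of the deleted arrangement
      have hGPa' : GPa (Module.finrank ℝ V) (fun i : Fin m => f i.castSucc) := by
        intro I lam hcard hsum i hi
        have hmap : ∑ j ∈ I.map emb, (Fin.lastCases 0 lam : Fin (m+1) → ℝ) j • f j = 0 := by
          rw [Finset.sum_map]
          simpa only [hembapp, Fin.lastCases_castSucc] using hsum
        have := hGPa (I.map emb) _ (by rwa [Finset.card_map]) hmap i.castSucc
          (Finset.mem_map_of_mem emb hi)
        simpa only [Fin.lastCases_castSucc] using this
      have hGPb' : GPb (Module.finrank ℝ V) (fun i : Fin m => f i.castSucc)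
          (fun i => c i.castSucc) := by
        intro I lam hcard hsum hsumc i hi
        have hmap : ∑ j ∈ I.map emb, (Fin.lastCases 0 lam : Fin (m+1) → ℝ) j • f j = 0 := by
          rw [Finset.sum_map]
          simpa only [hembapp, Fin.lastCases_castSucc] using hsum
        have hmapc : ∑ j ∈ I.map emb, (Fin.lastCases 0 lam : Fin (m+1) → ℝ) j * c j = 0 := by
          rw [Finset.sum_map]
          simpa only [hembapp, Fin.lastCases_castSucc] using hsumc
        have := hGPb (I.map emb) _ (by rwa [Finset.card_map]) hmap hmapc i.castSucc
          (Finset.mem_map_of_mem emb hi)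
        simpa only [Fin.lastCases_castSucc] using this
      -- the restricted functional sums are multiples of `f last`
      have hWapply : ∀ (I : Finset (Fin m)) (lam : Fin m → ℝ),
          (∑ i ∈ I, lam i • h i = 0) →
          (∑ i ∈ I, lam i • f i.castSucc)
            = (∑ i ∈ I, lam i • f i.castSucc) u' • f (Fin.last m) := by
        intro I lam hsum
        refine eq_smul_of_vanish hu' fun w hw => ?_
        have hmemw : w ∈ W := LinearMap.mem_ker.mpr hw
        have h0 : (∑ i ∈ I, lam i • h i) ⟨w, hmemw⟩ = 0 := by rw [hsum]; rfl
        rw [LinearMap.sum_apply] at h0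
        simp only [LinearMap.smul_apply, hhdef, LinearMap.comp_apply,
          Submodule.coe_subtype] at h0
        simpa only [LinearMap.sum_apply, LinearMap.smul_apply] using h0
      have hGPaW : GPa (Module.finrank ℝ W) h := by
        intro I lam hcard hsum i hi
        have hμ := hWapply I lam hsum
        set μ : ℝ := (∑ i ∈ I, lam i • f i.castSucc) u' with hμdef
        have hcardJ : (insert (Fin.last m) (I.map emb)).card ≤ Module.finrank ℝ V := by
          rw [Finset.card_insert_of_notMem (hnotmem I), Finset.card_map]
          omega
        have hsumJ : ∑ j ∈ insert (Fin.last m) (I.map emb),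
            (Fin.lastCases (-μ) lam : Fin (m+1) → ℝ) j • f j = 0 := by
          rw [Finset.sum_insert (hnotmem I), Finset.sum_map]
          simp only [hembapp, Fin.lastCases_castSucc, Fin.lastCases_last]
          rw [hμ]
          exact (congrArg (· + μ • f (Fin.last m)) (neg_smul μ (f (Fin.last m)))).trans (neg_add_cancel _)
        have := hGPa (insert (Fin.last m) (I.map emb)) _ hcardJ hsumJ i.castSucc
          (Finset.mem_insert_of_mem (Finset.mem_map_of_mem emb hi))
        simpa only [Fin.lastCases_castSucc] using this
      have hGPbW : GPb (Module.finrank ℝ W) h c'' := by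
        intro I lam hcard hsum hsumc i hi
        have hμ := hWapply I lam hsum
        set μ : ℝ := (∑ i ∈ I, lam i • f i.castSucc) u' with hμdef
        have hcardJ : (insert (Fin.last m) (I.map emb)).card ≤ Module.finrank ℝ V + 1 := by
          rw [Finset.card_insert_of_notMem (hnotmem I), Finset.card_map]
          omega
        have hsumJ : ∑ j ∈ insert (Fin.last m) (I.map emb),
            (Fin.lastCases (-μ) lam : Fin (m+1) → ℝ) j • f j = 0 := by
          rw [Finset.sum_insert (hnotmem I), Finset.sum_map]
          simp only [hembapp, Fin.lastCases_castSucc, Fin.lastCases_last]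
          rw [hμ]
          ext x
          simp
        have hgp : ∑ i ∈ I, lam i * f i.castSucc p
            = (∑ i ∈ I, lam i • f i.castSucc) p := by
          rw [LinearMap.sum_apply]
          exact Finset.sum_congr rfl fun i _ => by
            rw [LinearMap.smul_apply, smul_eq_mul]
        have hgp2 : (∑ i ∈ I, lam i • f i.castSucc) p = μ * (-(c (Fin.last m))) := by
          rw [hμ, LinearMap.smul_apply, smul_eq_mul, hp]
        have hcc : ∑ i ∈ I, lam i * c i.castSucc = μ * c (Fin.last m) := by
          have hexp : ∑ i ∈ I, lam i * c'' i
              = ∑ i ∈ I, lam i * c i.castSucc + ∑ i ∈ I, lam i * f i.castSucc p := by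
            rw [← Finset.sum_add_distrib]
            exact Finset.sum_congr rfl fun i _ => by rw [hc''def]; ring
          rw [hexp, hgp, hgp2] at hsumc
          linarith
        have hsumcJ : ∑ j ∈ insert (Fin.last m) (I.map emb),
            (Fin.lastCases (-μ) lam : Fin (m+1) → ℝ) j * c j = 0 := by
          rw [Finset.sum_insert (hnotmem I), Finset.sum_map]
          simp only [hembapp, Fin.lastCases_castSucc, Fin.lastCases_last]
          rw [hcc]
          ring
        have := hGPb (insert (Fin.last m) (I.map emb)) _ hcardJ hsumJ hsumcJ i.castSucc
          (Finset.mem_insert_of_mem (Finset.mem_map_of_mem emb hi))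
        simpa only [Fin.lastCases_castSucc] using this
      -- induction hypotheses
      have hS'ge : ∑ j ∈ Finset.range (Module.finrank ℝ V + 1), m.choose j
          ≤ (SignsSet (fun i : Fin m => f i.castSucc) (fun i => c i.castSucc)).ncard :=
        ih V _ _ hGPa' hGPb'
      have hWge : ∑ j ∈ Finset.range (Module.finrank ℝ V), m.choose j
          ≤ (SignsSet h c'').ncard := by
        have := ih W h c'' hGPaW hGPbW
        rwa [show Module.finrank ℝ W + 1 = Module.finrank ℝ V from hrank] at this
      -- sets
      set r : (Fin (m + 1) → Bool) → (Fin m → Bool) := fun s i => s i.castSucc with hrdef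
      set St := SignsSet f c ∩ {s | s (Fin.last m) = true} with hStdef
      set Sf := SignsSet f c ∩ {s | s (Fin.last m) = false} with hSfdef
      have hsplit : SignsSet f c = St ∪ Sf := by
        ext s
        constructor
        · intro hs
          rcases Bool.eq_false_or_eq_true (s (Fin.last m)) with hb | hb
          · exact Or.inl ⟨hs, hb⟩
          · exact Or.inr ⟨hs, hb⟩
        · rintro (⟨hs, _⟩ | ⟨hs, _⟩) <;> exact hs
      have hdisj : Disjoint St Sf := by
        rw [Set.disjoint_left]
        rintro s ⟨_, h1⟩ ⟨_, h2⟩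
        rw [Set.mem_setOf_eq] at h1 h2
        rw [h1] at h2
        exact Bool.noConfusion h2
      have hcards : (SignsSet f c).ncard = St.ncard + Sf.ncard := by
        rw [hsplit]
        exact Set.ncard_union_eq hdisj (Set.toFinite _) (Set.toFinite _)
      have hEt : (r '' St).ncard = St.ncard :=
        Set.ncard_image_of_injOn ((restrict_injOn m true).mono fun s hs => hs.2)
      have hEf : (r '' Sf).ncard = Sf.ncard :=
        Set.ncard_image_of_injOn ((restrict_injOn m false).mono fun s hs => hs.2)
      -- every sign vector of the deleted arrangement extends
      have hsub1 : SignsSet (fun i : Fin m => f i.castSucc) (fun i => c i.castSucc)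
          ⊆ (r '' St) ∪ (r '' Sf) := by
        rintro s' ⟨x, hx⟩
        by_cases hy : f (Fin.last m) x + c (Fin.last m) = 0
        · obtain ⟨s, hs, hlastval, hrs⟩ := extend_mem hu' hx hy true
          exact Or.inl ⟨s, ⟨hs, hlastval⟩, hrs⟩
        · rcases Bool.eq_false_or_eq_true (decide (0 < f (Fin.last m) x + c (Fin.last m)))
            with hb | hb
          · -- decide = true
            refine Or.inl ⟨Fin.lastCases true s', ⟨⟨x, fun j => ?_⟩, by
              simp only [Set.mem_setOf_eq, Fin.lastCases_last]⟩,
              funext fun i => Fin.lastCases_castSucc i⟩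
            induction j using Fin.lastCases with
            | last =>
              simp only [Fin.lastCases_last]
              exact ⟨hy, hb.symm⟩
            | cast i =>
              simp only [Fin.lastCases_castSucc]
              exact hx i
          · -- decide = false
            refine Or.inr ⟨Fin.lastCases false s', ⟨⟨x, fun j => ?_⟩, by
              simp only [Set.mem_setOf_eq, Fin.lastCases_last]⟩,
              funext fun i => Fin.lastCases_castSucc i⟩
            induction j using Fin.lastCases with
            | last =>
              simp only [Fin.lastCases_last]
              exact ⟨hy, hb.symm⟩
            | cast i =>
              simp only [Fin.lastCases_castSucc]
              exact hx i
      -- every sign vector of the restricted arrangement extends both ways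
      have hsub2 : SignsSet h c'' ⊆ (r '' St) ∩ (r '' Sf) := by
        rintro s' ⟨w, hw⟩
        have hxi : ∀ i : Fin m, f i.castSucc (p + (w : V)) + c i.castSucc ≠ 0 ∧
            s' i = decide (0 < f i.castSucc (p + (w : V)) + c i.castSucc) := by
          intro i
          have := hw i
          rw [hhdef] at this
          simp only [LinearMap.comp_apply, Submodule.coe_subtype, hc''def] at this
          have heqv : f i.castSucc (p + (w : V)) + c i.castSucc
              = f i.castSucc (w : V) + (c i.castSucc + f i.castSucc p) := by
            rw [map_add]; ring
          rw [heqv]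
          exact this
        have hlastv : f (Fin.last m) (p + (w : V)) + c (Fin.last m) = 0 := by
          have hwker : f (Fin.last m) (w : V) = 0 := w.2
          rw [map_add, hp, hwker]
          ring
        constructor
        · obtain ⟨s, hs, hlastval, hrs⟩ := extend_mem hu' hxi hlastv true
          exact ⟨s, ⟨hs, hlastval⟩, hrs⟩
        · obtain ⟨s, hs, hlastval, hrs⟩ := extend_mem hu' hxi hlastv false
          exact ⟨s, ⟨hs, hlastval⟩, hrs⟩
      calc ∑ j ∈ Finset.range (Module.finrank ℝ V + 1), (m + 1).choose j
          = ∑ j ∈ Finset.range (Module.finrank ℝ V + 1), m.choose j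
            + ∑ j ∈ Finset.range (Module.finrank ℝ V), m.choose j :=
            pascal_sum m (Module.finrank ℝ V)
        _ ≤ (SignsSet (fun i : Fin m => f i.castSucc) (fun i => c i.castSucc)).ncard
            + (SignsSet h c'').ncard := add_le_add hS'ge hWge
        _ ≤ ((r '' St) ∪ (r '' Sf)).ncard + ((r '' St) ∩ (r '' Sf)).ncard :=
            add_le_add (Set.ncard_le_ncard hsub1 (Set.toFinite _))
              (Set.ncard_le_ncard hsub2 (Set.toFinite _))
        _ = (r '' St).ncard + (r '' Sf).ncard :=
            Set.ncard_union_add_ncard_inter _ _ (Set.toFinite _) (Set.toFinite _)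
        _ = St.ncard + Sf.ncard := by rw [hEt, hEf]
        _ = (SignsSet f c).ncard := hcards.symm

end Lower


section Bridge

lemma card_components_eq {d m : ℕ} (a : Fin m → EuclideanSpace ℝ (Fin d)) (b : Fin m → ℝ) :
    Nat.card (ConnectedComponents {x : EuclideanSpace ℝ (Fin d) // ∀ i, ⟪a i, x⟫ ≠ b i}) =
      (SignsSet (fun i => ((innerSL ℝ (a i)).toLinearMap : EuclideanSpace ℝ (Fin d) →ₗ[ℝ] ℝ))
        (fun i => -(b i))).ncard := by
  classical
  set X := {x : EuclideanSpace ℝ (Fin d) // ∀ i, ⟪a i, x⟫ ≠ b i} with hXdef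
  set σ : X → (Fin m → Bool) := fun x i => decide (b i < ⟪a i, (x : EuclideanSpace ℝ (Fin d))⟫)
    with hσdef
  set Vs : (Fin m → Bool) → Set (EuclideanSpace ℝ (Fin d)) := fun s =>
    ⋂ i, {x : EuclideanSpace ℝ (Fin d) | if s i then b i < ⟪a i, x⟫ else ⟪a i, x⟫ < b i}
    with hVsdef
  have hlin : ∀ i, IsLinearMap ℝ (fun x : EuclideanSpace ℝ (Fin d) => (⟪a i, x⟫ : ℝ)) :=
    fun i => ⟨fun x y => inner_add_right _ _ _, fun t x => real_inner_smul_right _ _ _⟩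
  have hVconv : ∀ s, Convex ℝ (Vs s) := by
    intro s
    refine convex_iInter fun i => ?_
    cases hsi : s i
    · simp only [hsi, Bool.false_eq_true, if_false]
      exact convex_halfSpace_lt (hlin i) (b i)
    · simp only [hsi, if_true]
      exact convex_halfSpace_gt (hlin i) (b i)
  have hVopen : ∀ s, IsOpen (Vs s) := by
    intro s
    refine isOpen_iInter_of_finite fun i => ?_
    cases hsi : s i
    · simp only [hsi, Bool.false_eq_true, if_false]
      exact isOpen_lt (innerSL ℝ (a i)).continuous continuous_const
    · simp only [hsi, if_true]
      exact isOpen_lt continuous_const (innerSL ℝ (a i)).continuous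
  have hVsub : ∀ s x, x ∈ Vs s → ∀ i, ⟪a i, x⟫ ≠ b i := by
    intro s x hx i
    have := Set.mem_iInter.mp hx i
    cases hsi : s i
    · rw [hsi] at this
      simp only [Bool.false_eq_true, if_false, Set.mem_setOf_eq] at this
      exact ne_of_lt this
    · rw [hsi] at this
      simp only [if_true, Set.mem_setOf_eq] at this
      exact (ne_of_lt this).symm
  have hmemV : ∀ x : X, (x : EuclideanSpace ℝ (Fin d)) ∈ Vs (σ x) := by
    intro x
    refine Set.mem_iInter.mpr fun i => ?_
    by_cases hlt : b i < ⟪a i, (x : EuclideanSpace ℝ (Fin d))⟫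
    · have : σ x i = true := decide_eq_true_eq.mpr hlt
      simp only [this, if_true, Set.mem_setOf_eq]
      exact hlt
    · have hlt' : ⟪a i, (x : EuclideanSpace ℝ (Fin d))⟫ < b i :=
        lt_of_le_of_ne (not_lt.mp hlt) (x.2 i)
      have : σ x i = false := decide_eq_false_iff_not.mpr hlt
      simp only [this, Bool.false_eq_true, if_false, Set.mem_setOf_eq]
      exact hlt'
  have hσspec : ∀ (x : X) (s : Fin m → Bool),
      (x : EuclideanSpace ℝ (Fin d)) ∈ Vs s → σ x = s := by
    intro x s hx
    funext i
    have := Set.mem_iInter.mp hx i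
    cases hsi : s i
    · rw [hsi] at this
      simp only [Bool.false_eq_true, if_false, Set.mem_setOf_eq] at this
      exact decide_eq_false_iff_not.mpr (not_lt.mpr (le_of_lt this))
    · rw [hsi] at this
      simp only [if_true, Set.mem_setOf_eq] at this
      exact decide_eq_true_eq.mpr this
  have hfiber : ∀ s, σ ⁻¹' {s} = Subtype.val ⁻¹' (Vs s) := by
    intro s
    ext x
    simp only [Set.mem_preimage, Set.mem_singleton_iff]
    constructor
    · rintro rfl
      exact hmemV x
    · intro hx
      exact hσspec x s hx
  have hcont : Continuous σ :=
    (IsLocallyConstant.iff_isOpen_fiber.mpr fun s => by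
      rw [hfiber]
      exact (hVopen s).preimage continuous_subtype_val).continuous
  have hFinj : Function.Injective hcont.connectedComponentsLift := by
    intro C1 C2 hC
    obtain ⟨x, rfl⟩ := ConnectedComponents.surjective_coe C1
    obtain ⟨y, rfl⟩ := ConnectedComponents.surjective_coe C2
    rw [hcont.connectedComponentsLift_apply_coe, hcont.connectedComponentsLift_apply_coe] at hC
    -- hC : σ x = σ y
    rw [ConnectedComponents.coe_eq_coe]
    have hpcs : PreconnectedSpace (Vs (σ x)) :=
      Subtype.preconnectedSpace (hVconv (σ x)).isPreconnected
    set j : (Vs (σ x)) → X := fun z => ⟨z.1, hVsub (σ x) z.1 z.2⟩ with hjdef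
    have hjcont : Continuous j := continuous_subtype_val.subtype_mk _
    have hpc : IsPreconnected (Set.range j) := isPreconnected_range hjcont
    have hxmem : x ∈ Set.range j := ⟨⟨x.1, hmemV x⟩, Subtype.ext rfl⟩
    have hymem : y ∈ Set.range j := ⟨⟨y.1, hC ▸ hmemV y⟩, Subtype.ext rfl⟩
    exact connectedComponent_eq (hpc.subset_connectedComponent hxmem hymem)
  have hrangeσ : Set.range hcont.connectedComponentsLift = Set.range σ := by
    ext s
    constructor
    · rintro ⟨C, rfl⟩
      obtain ⟨x, rfl⟩ := ConnectedComponents.surjective_coe C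
      exact ⟨x, (hcont.connectedComponentsLift_apply_coe x).symm⟩
    · rintro ⟨x, rfl⟩
      exact ⟨ConnectedComponents.mk x, hcont.connectedComponentsLift_apply_coe x⟩
  have hrange : Set.range σ
      = SignsSet (fun i => ((innerSL ℝ (a i)).toLinearMap : EuclideanSpace ℝ (Fin d) →ₗ[ℝ] ℝ))
        (fun i => -(b i)) := by
    ext s
    constructor
    · rintro ⟨x, rfl⟩
      refine ⟨(x : EuclideanSpace ℝ (Fin d)), fun i => ?_⟩
      constructor
      · simp only [ContinuousLinearMap.coe_coe, innerSL_apply_apply]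
        intro hc
        exact x.2 i (by linarith)
      · show σ x i = _
        rw [hσdef]
        simp only [ContinuousLinearMap.coe_coe, innerSL_apply_apply]
        refine decide_eq_decide.mpr ?_
        constructor <;> intro <;> linarith
    · rintro ⟨x, hx⟩
      have hX : ∀ i, ⟪a i, x⟫ ≠ b i := by
        intro i hc
        refine (hx i).1 ?_
        simp only [ContinuousLinearMap.coe_coe, innerSL_apply_apply, hc]
        ring
      refine ⟨⟨x, hX⟩, funext fun i => ?_⟩
      have h2 := (hx i).2
      simp only [ContinuousLinearMap.coe_coe, innerSL_apply_apply] at h2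
      show decide (b i < ⟪a i, x⟫) = s i
      rw [h2]
      refine decide_eq_decide.mpr ?_
      constructor <;> intro <;> linarith
  calc Nat.card (ConnectedComponents X)
      = Nat.card (Set.range hcont.connectedComponentsLift) :=
        Nat.card_congr (Equiv.ofInjective _ hFinj)
    _ = _ := by rw [hrangeσ, hrange, Nat.card_coe_set_eq]

end Bridge

end MaxRegions

open MaxRegions

/-- The maximum number of connected components (regions) of the complement of `m`
hyperplanes in `ℝ^d` equals `∑_{j=0}^{d} C(m, j)`. -/
theorem max_regions_of_hyperplanes (d m : ℕ) (hd : 0 < d) :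
    IsGreatest
      {n : ℕ | ∃ (a : Fin m → EuclideanSpace ℝ (Fin d)) (b : Fin m → ℝ),
        (∀ i, a i ≠ 0) ∧
        n = Nat.card
          (ConnectedComponents {x : EuclideanSpace ℝ (Fin d) // ∀ i, ⟪a i, x⟫ ≠ b i})}
      (∑ j ∈ Finset.range (d + 1), m.choose j) := by
  classical
  constructor
  · -- a general-position arrangement attains the bound
    set t : Fin m → ℝ := fun i => (i : ℕ) + 1 with htdef
    have htpos : ∀ i, 0 < t i := fun i => by positivity
    have htinj : Function.Injective t := by
      intro i j hij
      have h1 : ((i : ℕ) : ℝ) = ((j : ℕ) : ℝ) := by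
        have : ((i : ℕ) : ℝ) + 1 = ((j : ℕ) : ℝ) + 1 := hij
        linarith
      exact Fin.val_injective (Nat.cast_injective h1)
    set a : Fin m → EuclideanSpace ℝ (Fin d) :=
      fun i => WithLp.toLp 2 (fun k : Fin d => t i ^ ((k : ℕ) + 1)) with hadef
    have haapp : ∀ i k, a i k = t i ^ ((k : ℕ) + 1) := fun i k => rfl
    set bb : Fin m → ℝ := fun _ => 1 with hbbdef
    have ha : ∀ i, a i ≠ 0 := by
      intro i h0
      have h1 : a i ⟨0, hd⟩ = 0 := by rw [h0]; rfl
      rw [haapp] at h1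
      have := htpos i
      have := pow_ne_zero ((0 : ℕ) + 1) (ne_of_gt (htpos i))
      exact this h1
    have heval : ∀ (I : Finset (Fin m)) (lam : Fin m → ℝ) (k : Fin d),
        (∑ i ∈ I, lam i • ((innerSL ℝ (a i)).toLinearMap
            : EuclideanSpace ℝ (Fin d) →ₗ[ℝ] ℝ) = 0) →
        ∑ i ∈ I, lam i * t i ^ ((k : ℕ) + 1) = 0 := by
      intro I lam k hsum
      have h0 : (∑ i ∈ I, lam i • ((innerSL ℝ (a i)).toLinearMap
          : EuclideanSpace ℝ (Fin d) →ₗ[ℝ] ℝ)) (EuclideanSpace.single k 1) = 0 := by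
        rw [hsum]; rfl
      rw [LinearMap.sum_apply] at h0
      have hterm : ∀ i ∈ I, (lam i • ((innerSL ℝ (a i)).toLinearMap
          : EuclideanSpace ℝ (Fin d) →ₗ[ℝ] ℝ)) (EuclideanSpace.single k 1)
          = lam i * t i ^ ((k : ℕ) + 1) := by
        intro i _
        rw [LinearMap.smul_apply, smul_eq_mul]
        simp only [ContinuousLinearMap.coe_coe, innerSL_apply_apply]
        rw [EuclideanSpace.inner_single_right]
        simp [haapp]
      rw [Finset.sum_congr rfl hterm] at h0
      exact h0
    have hGPa : GPa (Module.finrank ℝ (EuclideanSpace ℝ (Fin d)))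
        (fun i => ((innerSL ℝ (a i)).toLinearMap : EuclideanSpace ℝ (Fin d) →ₗ[ℝ] ℝ)) := by
      intro I lam hcard hsum i hi
      rw [finrank_euclideanSpace_fin] at hcard
      have hmom : ∀ k ≤ d - 1, ∑ i ∈ I, (lam i * t i) * t i ^ k = 0 := by
        intro k hk
        have hkd : k < d := by omega
        have hh := heval I lam ⟨k, hkd⟩ hsum
        rw [← hh]
        exact Finset.sum_congr rfl fun i _ => by ring
      have := moment_zero I t (fun i => lam i * t i) htinj.injOn (d - 1) (by omega) hmom i hi
      rcases mul_eq_zero.mp this with hcase | hcase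
      · exact hcase
      · exact absurd hcase (ne_of_gt (htpos i))
    have hGPb : GPb (Module.finrank ℝ (EuclideanSpace ℝ (Fin d)))
        (fun i => ((innerSL ℝ (a i)).toLinearMap : EuclideanSpace ℝ (Fin d) →ₗ[ℝ] ℝ))
        (fun i => -(bb i)) := by
      intro I lam hcard hsum hsumc i hi
      rw [finrank_euclideanSpace_fin] at hcard
      have hmom : ∀ k ≤ d, ∑ i ∈ I, lam i * t i ^ k = 0 := by
        intro k hk
        cases k with
        | zero =>
          have h' := hsumc
          simp only [hbbdef, mul_neg, mul_one] at h'
          rw [Finset.sum_neg_distrib] at h'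
          simp only [pow_zero, mul_one]
          linarith
        | succ k' =>
          have hkd : k' < d := by omega
          exact heval I lam ⟨k', hkd⟩ hsum
      exact moment_zero I t lam htinj.injOn d hcard hmom i hi
    refine ⟨a, bb, ha, ?_⟩
    rw [card_components_eq a bb]
    have h1 : ∑ j ∈ Finset.range (d + 1), m.choose j
        ≤ (SignsSet (fun i => ((innerSL ℝ (a i)).toLinearMap
            : EuclideanSpace ℝ (Fin d) →ₗ[ℝ] ℝ)) (fun i => -(bb i))).ncard := by
      have := le_signs_ncard m (EuclideanSpace ℝ (Fin d))
        (fun i => ((innerSL ℝ (a i)).toLinearMap : EuclideanSpace ℝ (Fin d) →ₗ[ℝ] ℝ))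
        (fun i => -(bb i)) hGPa hGPb
      rwa [finrank_euclideanSpace_fin] at this
    have h2 : (SignsSet (fun i => ((innerSL ℝ (a i)).toLinearMap
          : EuclideanSpace ℝ (Fin d) →ₗ[ℝ] ℝ)) (fun i => -(bb i))).ncard
        ≤ ∑ j ∈ Finset.range (d + 1), m.choose j :=
      signs_ncard_le m (EuclideanSpace ℝ (Fin d)) d (le_of_eq finrank_euclideanSpace_fin) _ _
    exact le_antisymm h1 h2
  · -- no arrangement does better
    rintro n ⟨a, bb, ha, rfl⟩
    rw [card_components_eq a bb]
    exact signs_ncard_le m (EuclideanSpace ℝ (Fin d)) d (le_of_eq finrank_euclideanSpace_fin) _ _
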